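/- Let m ≥ 3 be an odd integer. Write each quaternion as x = z₁ + z₂·j where z₁ = x₁ + x₂·i and z₂ = x₃ + x₄·i are complex numbers, and define the real-valued polynomial functions I₂(x) = |z₁|² + |z₂|² = x₁²+x₂²+x₃²+x₄², I₄₁(x) = |z₁|²·|z₂|² = (x₁²+x₂²)(x₃²+x₄²), I₄₂(x) = z₁²·z̄₂² + z̄₁²·z₂², and I₆(x) = (|z₁|² - |z₂|²)·i·(z₁²·z̄₂² - z̄₁²·z₂²). Then I₂, I₄₁ and I₆ are invariant under G₁(m), i.e. I(g·x) = I(x) for all g ∈ G₁(m) and all x ∈ ℍ; I₄₂ is invariant under F₁(m); and I₄₂ changes sign under the generator [j,e₄]: I₄₂([j,e₄]·x) = -I₄₂(x) for all x. -/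

import Mathlib

noncomputable section

open Quaternion Real

/-- The quaternion `i`. -/
def qi : Quaternion ℝ := ⟨0, 1, 0, 0⟩
/-- The quaternion `j`. -/
def qj : Quaternion ℝ := ⟨0, 0, 1, 0⟩
/-- The quaternion `k`. -/
def qk : Quaternion ℝ := ⟨0, 0, 0, 1⟩
/-- The unit quaternion `e_s = cos(π/s) + sin(π/s) i`. -/
def es (s : ℕ) : Quaternion ℝ := ⟨Real.cos (Real.pi / s), Real.sin (Real.pi / s), 0, 0⟩

lemma norm_eq_one_of_normSq {a : Quaternion ℝ} (h : Quaternion.normSq a = 1) : ‖a‖ = 1 := by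
  have h2 : ‖a‖ * ‖a‖ = 1 := by rw [← Quaternion.normSq_eq_norm_mul_self, h]
  rcases mul_self_eq_one_iff.1 h2 with h' | h'
  · exact h'
  · nlinarith [norm_nonneg a]

lemma norm_qi : ‖qi‖ = 1 := norm_eq_one_of_normSq (by rw [Quaternion.normSq_def']; simp [qi])
lemma norm_qj : ‖qj‖ = 1 := norm_eq_one_of_normSq (by rw [Quaternion.normSq_def']; simp [qj])
lemma norm_qk : ‖qk‖ = 1 := norm_eq_one_of_normSq (by rw [Quaternion.normSq_def']; simp [qk])
lemma norm_es (s : ℕ) : ‖es s‖ = 1 :=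
  norm_eq_one_of_normSq (by
    rw [Quaternion.normSq_def']
    simp only [es]
    simp [Real.sin_sq_add_cos_sq, Real.cos_sq_add_sin_sq])

lemma self_mul_star_of_norm_one {a : Quaternion ℝ} (h : ‖a‖ = 1) : a * star a = 1 := by
  rw [Quaternion.self_mul_star]
  have h1 : Quaternion.normSq a = 1 := by rw [Quaternion.normSq_eq_norm_mul_self, h, mul_one]
  rw [h1]; norm_num

lemma star_mul_self_of_norm_one {a : Quaternion ℝ} (h : ‖a‖ = 1) : star a * a = 1 := by
  rw [Quaternion.star_mul_self]
  have h1 : Quaternion.normSq a = 1 := by rw [Quaternion.normSq_eq_norm_mul_self, h, mul_one]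
  rw [h1]; norm_num

/-- The rotation `[l,r] : x ↦ l̄ x r` of `ℝ⁴ ≅ ℍ`, for unit quaternions `l, r`. -/
def qrot (l r : Quaternion ℝ) (hl : ‖l‖ = 1) (hr : ‖r‖ = 1) :
    Quaternion ℝ ≃ₗ[ℝ] Quaternion ℝ where
  toFun x := star l * x * r
  invFun x := l * x * star r
  map_add' x y := by noncomm_ring
  map_smul' c x := by simp [mul_smul_comm, smul_mul_assoc]
  left_inv x := by
    have h : l * (star l * x * r) * star r = (l * star l) * x * (r * star r) := by noncomm_ring
    simp [h, self_mul_star_of_norm_one hl, self_mul_star_of_norm_one hr]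
  right_inv x := by
    have h : star l * (l * x * star r) * r = (star l * l) * x * (star r * r) := by noncomm_ring
    simp [h, star_mul_self_of_norm_one hl, star_mul_self_of_norm_one hr]

/-- The group `G₁(m)`. -/
def G1 (m : ℕ) : Subgroup (Quaternion ℝ ≃ₗ[ℝ] Quaternion ℝ) :=
  Subgroup.closure
    {qrot (es m) 1 (norm_es m) norm_one,
     qrot 1 qi norm_one norm_qi,
     qrot 1 qj norm_one norm_qj,
     qrot qj (es 4) norm_qj (norm_es 4)}

/-- The group `G₂(m)`. -/
def G2 (m : ℕ) : Subgroup (Quaternion ℝ ≃ₗ[ℝ] Quaternion ℝ) :=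
  Subgroup.closure
    {qrot (es m) 1 (norm_es m) norm_one,
     qrot 1 qi norm_one norm_qi,
     qrot (es (2 * m)) qj (norm_es (2 * m)) norm_qj,
     qrot qj (es 4) norm_qj (norm_es 4)}

/-- The group `G₃(m)`. -/
def G3 (m : ℕ) : Subgroup (Quaternion ℝ ≃ₗ[ℝ] Quaternion ℝ) :=
  Subgroup.closure
    {qrot (es m) 1 (norm_es m) norm_one,
     qrot 1 qi norm_one norm_qi,
     qrot qj 1 norm_qj norm_one,
     qrot 1 qj norm_one norm_qj}

/-- The group `F₁(m)`. -/
def F1 (m : ℕ) : Subgroup (Quaternion ℝ ≃ₗ[ℝ] Quaternion ℝ) :=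
  Subgroup.closure
    {qrot (es m) qi (norm_es m) norm_qi,
     qrot 1 qj norm_one norm_qj}

/-- The complex coordinate `z₁ = x₁ + x₂ i` of a quaternion `x = z₁ + z₂ j`. -/
def zc1 (x : Quaternion ℝ) : ℂ := ⟨x.re, x.imI⟩
/-- The complex coordinate `z₂ = x₃ + x₄ i` of a quaternion `x = z₁ + z₂ j`. -/
def zc2 (x : Quaternion ℝ) : ℂ := ⟨x.imJ, x.imK⟩

/-- `I₂(x) = |z₁|² + |z₂|² = x₁² + x₂² + x₃² + x₄²`. -/
def I2 (x : Quaternion ℝ) : ℝ := x.re ^ 2 + x.imI ^ 2 + x.imJ ^ 2 + x.imK ^ 2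
/-- `I₄₁(x) = |z₁|²·|z₂|²`. -/
def I41 (x : Quaternion ℝ) : ℝ := (x.re ^ 2 + x.imI ^ 2) * (x.imJ ^ 2 + x.imK ^ 2)
/-- `I₄₂(x) = z₁² z̄₂² + z̄₁² z₂²` (a real number, viewed in `ℂ`). -/
def I42 (x : Quaternion ℝ) : ℂ :=
  zc1 x ^ 2 * (starRingEnd ℂ) (zc2 x) ^ 2 + (starRingEnd ℂ) (zc1 x) ^ 2 * zc2 x ^ 2
/-- `I₆(x) = (|z₁|² - |z₂|²) · i · (z₁² z̄₂² - z̄₁² z₂²)` (a real number, viewed in `ℂ`). -/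
def I6 (x : Quaternion ℝ) : ℂ :=
  ((Complex.normSq (zc1 x) - Complex.normSq (zc2 x) : ℝ) : ℂ) * Complex.I *
    (zc1 x ^ 2 * (starRingEnd ℂ) (zc2 x) ^ 2 - (starRingEnd ℂ) (zc1 x) ^ 2 * zc2 x ^ 2)


/-! ### Auxiliary machinery for the invariance proof -/

def wc (s : ℕ) : ℂ := ⟨Real.cos (Real.pi / s), Real.sin (Real.pi / s)⟩

lemma normSq_wc (s : ℕ) : Complex.normSq (wc s) = 1 := by
  rw [wc, Complex.normSq_mk]
  linear_combination Real.sin_sq_add_cos_sq (Real.pi / s)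

lemma normSq_conj_wc (s : ℕ) : Complex.normSq ((starRingEnd ℂ) (wc s)) = 1 := by
  rw [Complex.normSq_conj]; exact normSq_wc s

lemma wc4_sq : wc 4 ^ 2 = Complex.I := by
  have h4 : ((4:ℕ):ℝ) = 4 := by norm_num
  have hc := Real.cos_pi_div_four
  have hs := Real.sin_pi_div_four
  have h2 : Real.sqrt 2 * Real.sqrt 2 = 2 := Real.mul_self_sqrt (by norm_num)
  apply Complex.ext <;>
    simp [wc, pow_two, Complex.mul_re, Complex.mul_im, h4, hc, hs, Complex.I_re, Complex.I_im] <;>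
    nlinarith [h2]

lemma conj_wc4_sq : (starRingEnd ℂ) (wc 4) ^ 2 = -Complex.I := by
  rw [← map_pow, wc4_sq, Complex.conj_I]

/-! componentwise action of the generators -/

@[simp] lemma qi_re : qi.re = 0 := rfl
@[simp] lemma qi_imI : qi.imI = 1 := rfl
@[simp] lemma qi_imJ : qi.imJ = 0 := rfl
@[simp] lemma qi_imK : qi.imK = 0 := rfl
@[simp] lemma qj_re : qj.re = 0 := rfl
@[simp] lemma qj_imI : qj.imI = 0 := rfl
@[simp] lemma qj_imJ : qj.imJ = 1 := rfl
@[simp] lemma qj_imK : qj.imK = 0 := rfl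
@[simp] lemma es_re (s : ℕ) : (es s).re = Real.cos (Real.pi / s) := rfl
@[simp] lemma es_imI (s : ℕ) : (es s).imI = Real.sin (Real.pi / s) := rfl
@[simp] lemma es_imJ (s : ℕ) : (es s).imJ = 0 := rfl
@[simp] lemma es_imK (s : ℕ) : (es s).imK = 0 := rfl

lemma zc1_mulA (m : ℕ) (x : Quaternion ℝ) :
    zc1 (star (es m) * x * 1) = (starRingEnd ℂ) (wc m) * zc1 x := by
  apply Complex.ext <;>
    simp [zc1, wc, Quaternion.re_mul, Quaternion.imI_mul, Complex.mul_re, Complex.mul_im] <;> ring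
lemma zc2_mulA (m : ℕ) (x : Quaternion ℝ) :
    zc2 (star (es m) * x * 1) = (starRingEnd ℂ) (wc m) * zc2 x := by
  apply Complex.ext <;>
    simp [zc2, wc, Quaternion.imJ_mul, Quaternion.imK_mul, Complex.mul_re, Complex.mul_im] <;> ring
lemma zc1_mulB (x : Quaternion ℝ) : zc1 (star 1 * x * qi) = Complex.I * zc1 x := by
  apply Complex.ext <;>
    simp [zc1, Quaternion.re_mul, Quaternion.imI_mul, Complex.mul_re, Complex.mul_im]
lemma zc2_mulB (x : Quaternion ℝ) : zc2 (star 1 * x * qi) = (-Complex.I) * zc2 x := by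
  apply Complex.ext <;>
    simp [zc2, Quaternion.imJ_mul, Quaternion.imK_mul, Complex.mul_re, Complex.mul_im]
lemma zc1_mulC (x : Quaternion ℝ) : zc1 (star 1 * x * qj) = - zc2 x := by
  apply Complex.ext <;>
    simp [zc1, zc2, Quaternion.re_mul, Quaternion.imI_mul]
lemma zc2_mulC (x : Quaternion ℝ) : zc2 (star 1 * x * qj) = zc1 x := by
  apply Complex.ext <;>
    simp [zc1, zc2, Quaternion.imJ_mul, Quaternion.imK_mul]
lemma zc1_mulD (x : Quaternion ℝ) :
    zc1 (star qj * x * es 4) = (starRingEnd ℂ) (zc2 x) * wc 4 := by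
  apply Complex.ext <;>
    simp [zc1, zc2, wc, Quaternion.re_mul, Quaternion.imI_mul, Complex.mul_re, Complex.mul_im] <;> ring
lemma zc2_mulD (x : Quaternion ℝ) :
    zc2 (star qj * x * es 4) = -((starRingEnd ℂ) (zc1 x) * (starRingEnd ℂ) (wc 4)) := by
  apply Complex.ext <;>
    simp [zc1, zc2, wc, Quaternion.imJ_mul, Quaternion.imK_mul, Complex.mul_re, Complex.mul_im] <;> ring
lemma zc1_mulE (m : ℕ) (x : Quaternion ℝ) :
    zc1 (star (es m) * x * qi) = (Complex.I * (starRingEnd ℂ) (wc m)) * zc1 x := by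
  apply Complex.ext <;>
    simp [zc1, wc, Quaternion.re_mul, Quaternion.imI_mul, Complex.mul_re, Complex.mul_im] <;> ring
lemma zc2_mulE (m : ℕ) (x : Quaternion ℝ) :
    zc2 (star (es m) * x * qi) = (-(Complex.I * (starRingEnd ℂ) (wc m))) * zc2 x := by
  apply Complex.ext <;>
    simp [zc2, wc, Quaternion.imJ_mul, Quaternion.imK_mul, Complex.mul_re, Complex.mul_im] <;> ring

lemma I2_eq (x : Quaternion ℝ) : I2 x = Complex.normSq (zc1 x) + Complex.normSq (zc2 x) := by
  simp [I2, zc1, zc2, Complex.normSq_mk]; ring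
lemma I41_eq (x : Quaternion ℝ) : I41 x = Complex.normSq (zc1 x) * Complex.normSq (zc2 x) := by
  simp [I41, zc1, zc2, Complex.normSq_mk]; ring

section scale
variable {w v : ℂ} (h1 : Complex.normSq w = 1) (h3 : Complex.normSq v = 1)
  (h2 : (w * (starRingEnd ℂ) v) ^ 2 = 1)

lemma h2_pos (w : ℂ) (h1 : Complex.normSq w = 1) : (w * (starRingEnd ℂ) w) ^ 2 = 1 := by
  rw [Complex.mul_conj, h1]; norm_num
lemma h2_neg (w : ℂ) (h1 : Complex.normSq w = 1) : (w * (starRingEnd ℂ) (-w)) ^ 2 = 1 := by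
  rw [map_neg, mul_neg, Complex.mul_conj, h1]; norm_num

include h2 in
lemma h2_conj : ((starRingEnd ℂ) w * v) ^ 2 = 1 := by
  have := congrArg (starRingEnd ℂ) h2
  simpa using this

variable {y1 y2 : Quaternion ℝ}
  (hz1 : zc1 y1 = w * zc1 y2) (hz2 : zc2 y1 = v * zc2 y2)

include h1 h3 hz1 hz2 in
lemma I2_scale : I2 y1 = I2 y2 := by
  rw [I2_eq, I2_eq, hz1, hz2, Complex.normSq_mul, Complex.normSq_mul, h1, h3, one_mul, one_mul]

include h1 h3 hz1 hz2 in
lemma I41_scale : I41 y1 = I41 y2 := by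
  rw [I41_eq, I41_eq, hz1, hz2, Complex.normSq_mul, Complex.normSq_mul, h1, h3, one_mul, one_mul]

include h2 hz1 hz2 in
lemma I42_scale : I42 y1 = I42 y2 := by
  have h2' := h2_conj h2
  rw [I42, I42, hz1, hz2]
  simp only [map_mul]
  linear_combination (zc1 y2 ^ 2 * ((starRingEnd ℂ) (zc2 y2)) ^ 2) * h2 +
    (((starRingEnd ℂ) (zc1 y2)) ^ 2 * zc2 y2 ^ 2) * h2'

include h1 h3 h2 hz1 hz2 in
lemma I6_scale : I6 y1 = I6 y2 := by
  have h2' := h2_conj h2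
  rw [I6, I6, hz1, hz2, Complex.normSq_mul, Complex.normSq_mul, h1, h3, one_mul, one_mul]
  simp only [map_mul]
  linear_combination
    (((Complex.normSq (zc1 y2) - Complex.normSq (zc2 y2) : ℝ) : ℂ) * Complex.I) *
      ((zc1 y2 ^ 2 * ((starRingEnd ℂ) (zc2 y2)) ^ 2) * h2 -
       (((starRingEnd ℂ) (zc1 y2)) ^ 2 * zc2 y2 ^ 2) * h2')
end scale

section swap
variable {y1 y2 : Quaternion ℝ} (hz1 : zc1 y1 = - zc2 y2) (hz2 : zc2 y1 = zc1 y2)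
include hz1 hz2 in
lemma I2_swap : I2 y1 = I2 y2 := by
  rw [I2_eq, I2_eq, hz1, hz2, Complex.normSq_neg]; ring
include hz1 hz2 in
lemma I41_swap : I41 y1 = I41 y2 := by
  rw [I41_eq, I41_eq, hz1, hz2, Complex.normSq_neg]; ring
include hz1 hz2 in
lemma I42_swap : I42 y1 = I42 y2 := by
  rw [I42, I42, hz1, hz2]; simp only [map_neg]; ring
include hz1 hz2 in
lemma I6_swap : I6 y1 = I6 y2 := by
  rw [I6, I6, hz1, hz2]; simp only [map_neg, Complex.normSq_neg]
  push_cast; ring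
end swap

section g4gen
variable {y1 y2 : Quaternion ℝ}
  (hz1 : zc1 y1 = (starRingEnd ℂ) (zc2 y2) * wc 4)
  (hz2 : zc2 y1 = -((starRingEnd ℂ) (zc1 y2) * (starRingEnd ℂ) (wc 4)))
include hz1 hz2 in
lemma I2_g4 : I2 y1 = I2 y2 := by
  rw [I2_eq, I2_eq, hz1, hz2, Complex.normSq_neg, Complex.normSq_mul, Complex.normSq_mul,
    Complex.normSq_conj, Complex.normSq_conj, Complex.normSq_conj, normSq_wc]
  ring
include hz1 hz2 in
lemma I41_g4 : I41 y1 = I41 y2 := by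
  rw [I41_eq, I41_eq, hz1, hz2, Complex.normSq_neg, Complex.normSq_mul, Complex.normSq_mul,
    Complex.normSq_conj, Complex.normSq_conj, Complex.normSq_conj, normSq_wc]
  ring
include hz1 hz2 in
lemma I42_g4 : I42 y1 = - I42 y2 := by
  rw [I42, I42, hz1, hz2]
  simp only [map_mul, map_neg, Complex.conj_conj]
  linear_combination (wc 4 ^ 2 + Complex.I) * (zc1 y2 ^ 2 * ((starRingEnd ℂ) (zc2 y2)) ^ 2) * wc4_sq +
    (((starRingEnd ℂ) (wc 4)) ^ 2 - Complex.I) * (((starRingEnd ℂ) (zc1 y2)) ^ 2 * zc2 y2 ^ 2) * conj_wc4_sq +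
    (zc1 y2 ^ 2 * ((starRingEnd ℂ) (zc2 y2)) ^ 2 + ((starRingEnd ℂ) (zc1 y2)) ^ 2 * zc2 y2 ^ 2) * Complex.I_sq
include hz1 hz2 in
lemma I6_g4 : I6 y1 = I6 y2 := by
  rw [I6, I6, hz1, hz2, Complex.normSq_neg, Complex.normSq_mul, Complex.normSq_mul,
    Complex.normSq_conj, Complex.normSq_conj, Complex.normSq_conj, normSq_wc, mul_one, mul_one]
  simp only [map_mul, map_neg, Complex.conj_conj]
  push_cast
  linear_combination
    (-((Complex.normSq (zc1 y2) : ℂ) - (Complex.normSq (zc2 y2) : ℂ)) * Complex.I * (wc 4 ^ 2 + Complex.I) *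
      (zc1 y2 ^ 2 * ((starRingEnd ℂ) (zc2 y2)) ^ 2)) * wc4_sq +
    (((Complex.normSq (zc1 y2) : ℂ) - (Complex.normSq (zc2 y2) : ℂ)) * Complex.I * (((starRingEnd ℂ) (wc 4)) ^ 2 - Complex.I) *
      (((starRingEnd ℂ) (zc1 y2)) ^ 2 * zc2 y2 ^ 2)) * conj_wc4_sq +
    (((Complex.normSq (zc2 y2) : ℂ) - (Complex.normSq (zc1 y2) : ℂ)) *
      (zc1 y2 ^ 2 * ((starRingEnd ℂ) (zc2 y2)) ^ 2 - ((starRingEnd ℂ) (zc1 y2)) ^ 2 * zc2 y2 ^ 2) *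
      Complex.I) * Complex.I_sq
end g4gen

/-- The subgroup of automorphisms leaving a function `I` invariant. -/
def inva {α : Type*} (I : Quaternion ℝ → α) : Subgroup (Quaternion ℝ ≃ₗ[ℝ] Quaternion ℝ) where
  carrier := {g | ∀ x, I (g x) = I x}
  one_mem' := fun _ => rfl
  mul_mem' := fun {a b} ha hb x => (ha (b x)).trans (hb x)
  inv_mem' := fun {a} ha x => by
    have h := ha (a⁻¹ x)
    have h2 : a (a⁻¹ x) = x := a.apply_symm_apply x
    rw [h2] at h
    exact h.symm

lemma G1_le_inva {α : Type*} {I : Quaternion ℝ → α} (m : ℕ)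
    (hA : qrot (es m) 1 (norm_es m) norm_one ∈ inva I)
    (hB : qrot 1 qi norm_one norm_qi ∈ inva I)
    (hC : qrot 1 qj norm_one norm_qj ∈ inva I)
    (hD : qrot qj (es 4) norm_qj (norm_es 4) ∈ inva I) : G1 m ≤ inva I := by
  rw [G1]
  apply (Subgroup.closure_le _).mpr
  rintro g hg
  simp only [Set.mem_insert_iff, Set.mem_singleton_iff] at hg
  rcases hg with rfl | rfl | rfl | rfl <;> assumption

lemma F1_le_inva {α : Type*} {I : Quaternion ℝ → α} (m : ℕ)
    (hE : qrot (es m) qi (norm_es m) norm_qi ∈ inva I)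
    (hC : qrot 1 qj norm_one norm_qj ∈ inva I) : F1 m ≤ inva I := by
  rw [F1]
  apply (Subgroup.closure_le _).mpr
  rintro g hg
  simp only [Set.mem_insert_iff, Set.mem_singleton_iff] at hg
  rcases hg with rfl | rfl <;> assumption

/-- `I₂`, `I₄₁` and `I₆` are invariant under `G₁(m)`; `I₄₂` is invariant under
`F₁(m)` and changes sign under the generator `[j, e₄]`. -/
theorem invariants_of_G1 (m : ℕ) (hm : 3 ≤ m) (hodd : Odd m) :
    (∀ g ∈ G1 m, ∀ x : Quaternion ℝ, I2 (g x) = I2 x) ∧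
    (∀ g ∈ G1 m, ∀ x : Quaternion ℝ, I41 (g x) = I41 x) ∧
    (∀ g ∈ G1 m, ∀ x : Quaternion ℝ, I6 (g x) = I6 x) ∧
    (∀ g ∈ F1 m, ∀ x : Quaternion ℝ, I42 (g x) = I42 x) ∧
    (∀ x : Quaternion ℝ, I42 (qrot qj (es 4) norm_qj (norm_es 4) x) = - I42 x) := by
  have hIneg : Complex.normSq (-Complex.I) = 1 := by simp
  have hE1 : Complex.normSq (Complex.I * (starRingEnd ℂ) (wc m)) = 1 := by
    simp [Complex.normSq_mul, Complex.normSq_conj, normSq_wc]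
  have hE3 : Complex.normSq (-(Complex.I * (starRingEnd ℂ) (wc m))) = 1 := by
    rw [Complex.normSq_neg]; exact hE1
  refine ⟨?_, ?_, ?_, ?_, ?_⟩
  · exact fun g hg => G1_le_inva m
      (fun x => I2_scale (normSq_conj_wc m) (normSq_conj_wc m) (zc1_mulA m x) (zc2_mulA m x))
      (fun x => I2_scale Complex.normSq_I hIneg (zc1_mulB x) (zc2_mulB x))
      (fun x => I2_swap (zc1_mulC x) (zc2_mulC x))
      (fun x => I2_g4 (zc1_mulD x) (zc2_mulD x)) hg
  · exact fun g hg => G1_le_inva m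
      (fun x => I41_scale (normSq_conj_wc m) (normSq_conj_wc m) (zc1_mulA m x) (zc2_mulA m x))
      (fun x => I41_scale Complex.normSq_I hIneg (zc1_mulB x) (zc2_mulB x))
      (fun x => I41_swap (zc1_mulC x) (zc2_mulC x))
      (fun x => I41_g4 (zc1_mulD x) (zc2_mulD x)) hg
  · exact fun g hg => G1_le_inva m
      (fun x => I6_scale (normSq_conj_wc m) (normSq_conj_wc m)
        (h2_pos _ (normSq_conj_wc m)) (zc1_mulA m x) (zc2_mulA m x))
      (fun x => I6_scale Complex.normSq_I hIneg
        (h2_neg _ Complex.normSq_I) (zc1_mulB x) (zc2_mulB x))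
      (fun x => I6_swap (zc1_mulC x) (zc2_mulC x))
      (fun x => I6_g4 (zc1_mulD x) (zc2_mulD x)) hg
  · exact fun g hg => F1_le_inva m
      (fun x => I42_scale (h2_neg _ hE1) (zc1_mulE m x) (zc2_mulE m x))
      (fun x => I42_swap (zc1_mulC x) (zc2_mulC x)) hg
  · exact fun x => I42_g4 (zc1_mulD x) (zc2_mulD x)
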